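/- (Swartz's Dehn–Sommerville relations for balanced semi-Eulerian complexes, h-version.) Let Δ be a balanced simplicial complex of type a = (a_1, …, a_m) with flag h-numbers (h_b)_{b ≤ a}, let d = |a|, and suppose Δ is semi-Eulerian, i.e., m_F = 1 for every nonempty face F ∈ Δ. Then for every b ∈ ℕ^m with b ≤ a: h_{a−b} − h_b = (−1)^{|b|} · (χ̃(Δ) − (−1)^{d−1}) · ∏_{j=1}^m binomial(a_j, b_j). In particular, if moreover χ̃(Δ) = (−1)^{d−1} then h_{a−b} = h_b for all b ≤ a. -/

import Mathlib

open Finset MvPolynomial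

/-- A (finite, abstract) simplicial complex: a finite collection of finite subsets of `V`
containing the empty set and closed under taking subsets. -/
def IsSimplicialComplex {V : Type*} [DecidableEq V] (Δ : Finset (Finset V)) : Prop :=
  ∅ ∈ Δ ∧ ∀ F ∈ Δ, ∀ G ⊆ F, G ∈ Δ

/-- `Δ` has dimension `d - 1`: every face has at most `d` elements and some face has
exactly `d` elements. -/
def HasDimension {V : Type*} [DecidableEq V] (Δ : Finset (Finset V)) (d : ℕ) : Prop :=
  (∀ F ∈ Δ, F.card ≤ d) ∧ ∃ F ∈ Δ, F.card = d

/-- `fnum Δ i` is the number of faces of `Δ` with exactly `i` elements, i.e. `f_{i-1}`. -/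
def fnum {V : Type*} [DecidableEq V] (Δ : Finset (Finset V)) (i : ℕ) : ℕ :=
  (Δ.filter fun F => F.card = i).card

/-- The multiplicity `m_F = ∑_{G ∈ Δ, F ⊆ G} (−1)^{d−|G|}` of a face `F` of a complex of
dimension `d − 1` (all faces `G` satisfy `|G| ≤ d`, so `d - G.card` is the usual subtraction). -/
def mult {V : Type*} [DecidableEq V] (Δ : Finset (Finset V)) (d : ℕ) (F : Finset V) : ℤ :=
  ∑ G ∈ Δ.filter (fun G => F ⊆ G), (-1 : ℤ) ^ (d - G.card)

/-- The reduced Euler characteristic `χ̃(Γ) = ∑_{G ∈ Γ} (−1)^{|G|−1}`; the exponent is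
written `|G| + 1`, which has the same parity as `|G| − 1` (the empty face contributes `−1`). -/
def chiTilde {V : Type*} [DecidableEq V] (Γ : Finset (Finset V)) : ℤ :=
  ∑ G ∈ Γ, (-1 : ℤ) ^ (G.card + 1)

/-- The link of a face `F` in `Δ`. -/
def link {V : Type*} [DecidableEq V] (Δ : Finset (Finset V)) (F : Finset V) :
    Finset (Finset V) :=
  Δ.filter fun G => G ∩ F = ∅ ∧ G ∪ F ∈ Δ

/-- `Δ` (of dimension `d − 1`) is reciprocal if `m_F ∈ {0, 1}` for every nonempty face. -/
def IsReciprocal {V : Type*} [DecidableEq V] (Δ : Finset (Finset V)) (d : ℕ) : Prop :=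
  ∀ F ∈ Δ, F ≠ ∅ → mult Δ d F = 0 ∨ mult Δ d F = 1

/-- `Δ` (of dimension `d − 1`) is semi-Eulerian if `m_F = 1` for every nonempty face. -/
def IsSemiEulerian {V : Type*} [DecidableEq V] (Δ : Finset (Finset V)) (d : ℕ) : Prop :=
  ∀ F ∈ Δ, F ≠ ∅ → mult Δ d F = 1

/-- `fint Δ d i` is the number of interior faces (nonempty faces with `m_F = 1`) of `Δ`
with exactly `i` elements, i.e. `f^int_{i-1}`. -/
def fint {V : Type*} [DecidableEq V] (Δ : Finset (Finset V)) (d : ℕ) (i : ℕ) : ℕ :=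
  (Δ.filter fun F => F.card = i ∧ F ≠ ∅ ∧ mult Δ d F = 1).card

/-- `bvec κ F j` is the number of vertices of `F` with color `j`. -/
def bvec {V : Type*} [DecidableEq V] {m : ℕ} (κ : V → Fin m) (F : Finset V) (j : Fin m) : ℕ :=
  (F.filter fun v => κ v = j).card

/-- `Δ` is balanced of type `a` with respect to the coloring `κ`: every face of `Δ` that is
maximal under inclusion has exactly `a j` vertices of color `j`, for each color `j`. -/
def IsBalanced {V : Type*} [DecidableEq V] {m : ℕ} (Δ : Finset (Finset V))
    (κ : V → Fin m) (a : Fin m → ℕ) : Prop :=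
  ∀ F ∈ Δ, (∀ G ∈ Δ, F ⊆ G → G = F) → ∀ j, bvec κ F j = a j

namespace FlagDS

open Finset MvPolynomial

variable {V : Type*} [DecidableEq V] {m : ℕ} (κ : V → Fin m)

lemma bvec_sum_eq_card (F : Finset V) : ∑ j, bvec κ F j = F.card :=
  (Finset.card_eq_sum_card_fiberwise (fun v _ => Finset.mem_univ (κ v))).symm

lemma bvec_mono {F G : Finset V} (h : F ⊆ G) (j : Fin m) : bvec κ F j ≤ bvec κ G j :=
  Finset.card_le_card (Finset.filter_subset_filter _ h)

lemma bvec_sdiff {F G : Finset V} (h : F ⊆ G) (j : Fin m) :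
    bvec κ (G \ F) j = bvec κ G j - bvec κ F j := by
  unfold bvec
  have h1 : (G \ F).filter (fun v => κ v = j) = G.filter (fun v => κ v = j) \ F.filter (fun v => κ v = j) := by
    ext v; simp only [Finset.mem_filter, Finset.mem_sdiff]; tauto
  rw [h1, Finset.card_sdiff_of_subset (Finset.filter_subset_filter _ h)]

lemma prod_pow_bvec {M : Type*} [CommMonoid M] (f : Fin m → M) (F : Finset V) :
    ∏ j, f j ^ bvec κ F j = ∏ v ∈ F, f (κ v) := by
  rw [← Finset.prod_fiberwise_of_maps_to (fun v _ => Finset.mem_univ (κ v)) (fun v => f (κ v))]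
  refine Finset.prod_congr rfl fun j _ => ?_
  rw [Finset.prod_congr rfl (fun v hv => by rw [(Finset.mem_filter.1 hv).2] :
    ∀ v ∈ F.filter fun v => κ v = j, f (κ v) = f j), Finset.prod_const]
  rfl

lemma filter_subset_eq_powerset {Δ : Finset (Finset V)} (hΔ : IsSimplicialComplex Δ)
    {G : Finset V} (hG : G ∈ Δ) : Δ.filter (fun F => F ⊆ G) = G.powerset := by
  ext F
  simp only [Finset.mem_filter, Finset.mem_powerset]
  exact ⟨fun h => h.2, fun h => ⟨hΔ.2 G hG F h, h⟩⟩

lemma bvec_le {Δ : Finset (Finset V)} (hΔ : IsSimplicialComplex Δ) {a : Fin m → ℕ}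
    (hbal : IsBalanced Δ κ a) {F : Finset V} (hF : F ∈ Δ) (j : Fin m) : bvec κ F j ≤ a j := by
  obtain ⟨G, hG, hmax⟩ := Finset.exists_max_image (Δ.filter fun G => F ⊆ G) Finset.card
    ⟨F, Finset.mem_filter.2 ⟨hF, Finset.Subset.refl F⟩⟩
  have hGΔ : G ∈ Δ := (Finset.mem_filter.1 hG).1
  have hFG : F ⊆ G := (Finset.mem_filter.1 hG).2
  have hGmax : ∀ G' ∈ Δ, G ⊆ G' → G' = G := by
    intro G' hG' hsub
    exact (Finset.eq_of_subset_of_card_le hsub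
      (hmax G' (Finset.mem_filter.2 ⟨hG', hFG.trans hsub⟩))).symm
  calc bvec κ F j ≤ bvec κ G j := Finset.card_le_card (Finset.filter_subset_filter _ hFG)
    _ = a j := hbal G hGΔ hGmax j

lemma klee {Δ : Finset (Finset V)} (hΔ : IsSimplicialComplex Δ) {d : ℕ}
    (hse : IsSemiEulerian Δ d) : mult Δ d ∅ = (-1) ^ d + chiTilde Δ + 1 := by
  have key : ∑ F ∈ Δ, (-1 : ℤ) ^ F.card * mult Δ d F = (-1) ^ d := by
    unfold mult
    calc ∑ F ∈ Δ, (-1 : ℤ) ^ F.card * ∑ G ∈ Δ.filter (fun G => F ⊆ G), (-1 : ℤ) ^ (d - G.card)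
        = ∑ F ∈ Δ, ∑ G ∈ Δ, if F ⊆ G then (-1 : ℤ) ^ F.card * (-1 : ℤ) ^ (d - G.card) else 0 := by
          refine Finset.sum_congr rfl fun F _ => ?_
          rw [Finset.mul_sum, Finset.sum_filter]
      _ = ∑ G ∈ Δ, ∑ F ∈ Δ, if F ⊆ G then (-1 : ℤ) ^ F.card * (-1 : ℤ) ^ (d - G.card) else 0 :=
          Finset.sum_comm
      _ = ∑ G ∈ Δ, ∑ F ∈ G.powerset, (-1 : ℤ) ^ F.card * (-1 : ℤ) ^ (d - G.card) := by
          refine Finset.sum_congr rfl fun G hG => ?_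
          rw [← Finset.sum_filter, filter_subset_eq_powerset hΔ hG]
      _ = ∑ G ∈ Δ, (-1 : ℤ) ^ (d - G.card) * ∑ F ∈ G.powerset, (-1 : ℤ) ^ F.card := by
          refine Finset.sum_congr rfl fun G hG => ?_
          rw [Finset.mul_sum]
          exact Finset.sum_congr rfl fun F _ => mul_comm _ _
      _ = ∑ G ∈ Δ, (-1 : ℤ) ^ (d - G.card) * (if G = ∅ then 1 else 0) := by
          simp_rw [Finset.sum_powerset_neg_one_pow_card]
      _ = (-1) ^ d := by
          simp_rw [mul_ite, mul_one, mul_zero]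
          rw [Finset.sum_ite_eq' Δ ∅ (fun G => (-1 : ℤ) ^ (d - G.card)), if_pos hΔ.1]
          simp
  have split : ∑ F ∈ Δ, (-1 : ℤ) ^ F.card * mult Δ d F
      = mult Δ d ∅ + (∑ F ∈ Δ, (-1 : ℤ) ^ F.card) - 1 := by
    rw [← Finset.sum_erase_add Δ _ hΔ.1, ← Finset.sum_erase_add Δ (fun F => (-1:ℤ)^F.card) hΔ.1]
    have h1 : ∑ F ∈ Δ.erase ∅, (-1 : ℤ) ^ F.card * mult Δ d F
        = ∑ F ∈ Δ.erase ∅, (-1 : ℤ) ^ F.card := by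
      refine Finset.sum_congr rfl fun F hF => ?_
      rw [hse F (Finset.mem_of_mem_erase hF) (Finset.ne_of_mem_erase hF), mul_one]
    rw [h1]
    simp
    ring
  have hchi : chiTilde Δ = -∑ F ∈ Δ, (-1 : ℤ) ^ F.card := by
    unfold chiTilde
    rw [← Finset.sum_neg_distrib]
    exact Finset.sum_congr rfl fun F _ => by rw [pow_succ]; ring
  rw [split] at key
  rw [hchi]
  linarith

lemma X_pow_mul_one_sub_pow (j : Fin m) (E F : ℕ) :
    (X j : MvPolynomial (Fin m) ℤ) ^ E * (1 - X j) ^ F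
      = ∑ k ∈ Finset.range (F + 1), C ((-1) ^ k * ((F.choose k : ℤ))) * X j ^ (E + k) := by
  have h1 : (1 - (X j : MvPolynomial (Fin m) ℤ)) = (-X j) + 1 := by ring
  rw [h1, add_pow, Finset.mul_sum]
  refine Finset.sum_congr rfl fun k _ => ?_
  rw [neg_pow, map_mul, map_pow, map_neg, map_one, map_natCast, pow_add]
  ring

lemma XP_eq_monomial (e : Fin m → ℕ) :
    (∏ j, (X j : MvPolynomial (Fin m) ℤ) ^ e j) = monomial (Finsupp.equivFunOnFinite.symm e) 1 := by
  have hcoe : ∀ x, (Finsupp.equivFunOnFinite.symm e) x = e x :=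
    fun x => rfl
  calc (∏ j, (X j : MvPolynomial (Fin m) ℤ) ^ e j)
      = ∏ j, (X j : MvPolynomial (Fin m) ℤ) ^ (Finsupp.equivFunOnFinite.symm e) j := by
        simp [hcoe]
    _ = ∏ j ∈ (Finsupp.equivFunOnFinite.symm e).support,
          (X j : MvPolynomial (Fin m) ℤ) ^ (Finsupp.equivFunOnFinite.symm e) j :=
        (Finset.prod_subset (Finset.subset_univ _) fun j _ hj => by
          rw [Finsupp.notMem_support_iff.1 hj, pow_zero]).symm
    _ = monomial (Finsupp.equivFunOnFinite.symm e) 1 := prod_X_pow_eq_monomial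

lemma coeff_XP_mul_YP (e f c : Fin m → ℕ) :
    coeff (Finsupp.equivFunOnFinite.symm c)
      ((∏ j, (X j : MvPolynomial (Fin m) ℤ) ^ e j) * ∏ j, (1 - X j) ^ f j)
    = if ∀ j, e j ≤ c j ∧ c j ≤ e j + f j
      then (-1) ^ (∑ j, (c j - e j)) * ∏ j, (((f j).choose (c j - e j) : ℤ)) else 0 := by
  rw [← Finset.prod_mul_distrib]
  simp_rw [X_pow_mul_one_sub_pow]
  rw [Finset.prod_univ_sum]
  have hterm : ∀ k : Fin m → ℕ,
      (∏ j, C ((-1) ^ (k j) * (((f j).choose (k j) : ℤ))) * X j ^ (e j + k j))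
      = C (∏ j, (-1) ^ (k j) * (((f j).choose (k j) : ℤ)))
          * monomial (Finsupp.equivFunOnFinite.symm (fun j => e j + k j)) 1 := by
    intro k
    rw [Finset.prod_mul_distrib, ← XP_eq_monomial, map_prod]
  simp_rw [hterm, MvPolynomial.coeff_sum, coeff_C_mul, coeff_monomial]
  by_cases hc : ∀ j, e j ≤ c j ∧ c j ≤ e j + f j
  · rw [if_pos hc]
    rw [Finset.sum_eq_single (fun j => c j - e j)]
    · have h0 : (fun j => e j + (c j - e j)) = c := funext fun j => by have := hc j; omega
      rw [h0, if_pos rfl, mul_one, Finset.prod_mul_distrib, Finset.prod_pow_eq_pow_sum]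
    · intro k hk hne
      rw [if_neg, mul_zero]
      intro heq
      have h1 : (fun j => e j + k j) = c :=
        (Equiv.symm (Finsupp.equivFunOnFinite : (Fin m →₀ ℕ) ≃ (Fin m → ℕ))).injective heq
      exact hne (funext fun j => by have := congrFun h1 j; have := hc j; omega)
    · intro h0
      exact absurd (Fintype.mem_piFinset.2 fun j => Finset.mem_range.2 (by have := hc j; omega)) h0
  · rw [if_neg hc]
    refine Finset.sum_eq_zero fun k hk => ?_
    rw [if_neg, mul_zero]
    intro heq
    apply hc
    intro j
    have hk' : k j ≤ f j := by
      have := Fintype.mem_piFinset.1 hk j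
      simpa [Nat.lt_succ_iff] using this
    have h1 : e j + k j = c j :=
      congrFun ((Equiv.symm (Finsupp.equivFunOnFinite : (Fin m →₀ ℕ) ≃ (Fin m → ℕ))).injective heq) j
    omega

lemma coeff_YP (f c : Fin m → ℕ) :
    coeff (Finsupp.equivFunOnFinite.symm c)
      (∏ j, ((1 : MvPolynomial (Fin m) ℤ) - X j) ^ f j)
    = if ∀ j, c j ≤ f j then (-1) ^ (∑ j, c j) * ∏ j, (((f j).choose (c j) : ℤ)) else 0 := by
  have h := coeff_XP_mul_YP (m := m) (fun _ => 0) f c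
  simpa using h

lemma L1 {Δ : Finset (Finset V)} (hΔ : IsSimplicialComplex Δ) (a : Fin m → ℕ)
    {G' : Finset V} (hle : ∀ j, bvec κ G' j ≤ a j) :
    ∑ G ∈ G'.powerset,
        (∏ j, (X j : MvPolynomial (Fin m) ℤ) ^ bvec κ G j) * ∏ j, (1 - X j) ^ (a j - bvec κ G j)
      = ∏ j, ((1 : MvPolynomial (Fin m) ℤ) - X j) ^ (a j - bvec κ G' j) := by
  have hterm : ∀ G ∈ G'.powerset,
      (∏ j, (X j : MvPolynomial (Fin m) ℤ) ^ bvec κ G j) * ∏ j, (1 - X j) ^ (a j - bvec κ G j)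
      = (∏ j, ((1 : MvPolynomial (Fin m) ℤ) - X j) ^ (a j - bvec κ G' j)) *
          ((∏ v ∈ G, X (κ v)) * ∏ v ∈ G' \ G, (1 - X (κ v))) := by
    intro G hG
    have hsub : G ⊆ G' := Finset.mem_powerset.1 hG
    have h2 : (∏ j, ((1 : MvPolynomial (Fin m) ℤ) - X j) ^ (a j - bvec κ G j))
        = (∏ j, ((1 : MvPolynomial (Fin m) ℤ) - X j) ^ (a j - bvec κ G' j)) *
            ∏ j, (1 - X j) ^ (bvec κ G' j - bvec κ G j) := by
      rw [← Finset.prod_mul_distrib]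
      refine Finset.prod_congr rfl fun j _ => ?_
      rw [← pow_add]
      congr 1
      have := bvec_mono κ hsub j
      have := hle j
      omega
    have h3 : (∏ j, ((1 : MvPolynomial (Fin m) ℤ) - X j) ^ (bvec κ G' j - bvec κ G j))
        = ∏ v ∈ G' \ G, (1 - X (κ v)) := by
      rw [← prod_pow_bvec κ (fun j => (1 : MvPolynomial (Fin m) ℤ) - X j) (G' \ G)]
      exact Finset.prod_congr rfl fun j _ => by rw [bvec_sdiff κ hsub j]
    rw [prod_pow_bvec κ (fun j => (X j : MvPolynomial (Fin m) ℤ)) G, h2, h3]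
    ring
  rw [Finset.sum_congr rfl hterm, ← Finset.mul_sum]
  have hsum1 : ∑ G ∈ G'.powerset,
      (∏ v ∈ G, (X (κ v) : MvPolynomial (Fin m) ℤ)) * ∏ v ∈ G' \ G, (1 - X (κ v)) = 1 := by
    rw [← Finset.prod_add]
    simp
  rw [hsum1, mul_one]

lemma perG (a b g : Fin m → ℕ) (hba : ∀ j, b j ≤ a j) (hg : ∀ j, g j ≤ a j) (d n : ℕ)
    (hd : d = ∑ j, a j) (hn : n = ∑ j, g j) :
    (if ∀ j, g j ≤ a j - b j ∧ a j - b j ≤ g j + (a j - g j)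
     then (-1 : ℤ) ^ (∑ j, (a j - b j - g j)) * ∏ j, ((a j - g j).choose (a j - b j - g j) : ℤ)
     else 0)
    = (-1 : ℤ) ^ (d - n) *
      (if ∀ j, b j ≤ a j - g j
       then (-1 : ℤ) ^ (∑ j, b j) * ∏ j, ((a j - g j).choose (b j) : ℤ) else 0) := by
  by_cases hcond : ∀ j, b j ≤ a j - g j
  · have hcond' : ∀ j, g j ≤ a j - b j ∧ a j - b j ≤ g j + (a j - g j) := fun j => by
      have := hcond j; have := hg j; have := hba j; omega
    rw [if_pos hcond', if_pos hcond]
    have key : ∑ j, (a j - b j - g j) + ∑ j, b j + ∑ j, g j = ∑ j, a j := by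
      rw [← Finset.sum_add_distrib, ← Finset.sum_add_distrib]
      exact Finset.sum_congr rfl fun j _ => by have := hcond j; have := hg j; omega
    have hsum : ∑ j, (a j - b j - g j) = d - n - ∑ j, b j := by omega
    have hble : ∑ j, b j ≤ d - n := by omega
    have hsign : (-1 : ℤ) ^ (d - n - ∑ j, b j) = (-1 : ℤ) ^ (d - n) * (-1 : ℤ) ^ (∑ j, b j) := by
      conv_rhs => rw [show d - n = (d - n - ∑ j, b j) + ∑ j, b j from by omega]
      rw [pow_add, mul_assoc, ← pow_add, Even.neg_one_pow ⟨∑ j, b j, rfl⟩, mul_one]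
    have hch : ∏ j, ((a j - g j).choose (a j - b j - g j) : ℤ)
        = ∏ j, ((a j - g j).choose (b j) : ℤ) := by
      refine Finset.prod_congr rfl fun j _ => ?_
      have h1 : a j - b j - g j = (a j - g j) - b j := by omega
      rw [h1, Nat.choose_symm (hcond j)]
    rw [hsum, hsign, hch]
    ring
  · have h1 : ¬ ∀ j, g j ≤ a j - b j ∧ a j - b j ≤ g j + (a j - g j) := fun hC =>
      hcond fun j => by have := hC j; have := hba j; have := hg j; omega
    rw [if_neg h1, if_neg hcond, mul_zero]

end FlagDS
/-- Swartz's Dehn–Sommerville relations for balanced semi-Eulerian complexes: for `b ≤ a`,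
`h_{a−b} − h_b = (−1)^{|b|} (χ̃(Δ) − (−1)^{d−1}) ∏_j C(a_j, b_j)`; the exponent `d + 1`
has the same parity as `d − 1`. In particular if `χ̃(Δ) = (−1)^{d−1}` then `h_{a−b} = h_b`. -/
theorem flag_DS_semiEulerian {V : Type*} [DecidableEq V] (Δ : Finset (Finset V)) {m : ℕ}
    (hm : 1 ≤ m) (κ : V → Fin m) (a : Fin m → ℕ) (d : ℕ) (hd : d = ∑ j, a j) (hd1 : 1 ≤ d)
    (hΔ : IsSimplicialComplex Δ) (hbal : IsBalanced Δ κ a)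
    (hse : IsSemiEulerian Δ d)
    (h : (Fin m → ℕ) → ℤ)
    (hh : (∑ b ∈ Finset.Iic a, C (h b) * ∏ j, X j ^ b j : MvPolynomial (Fin m) ℤ)
        = ∑ F ∈ Δ, (∏ j, X j ^ bvec κ F j) * ∏ j, (1 - X j) ^ (a j - bvec κ F j)) :
    (∀ b : Fin m → ℕ, b ≤ a →
      h (a - b) - h b
        = (-1 : ℤ) ^ (∑ j, b j) * (chiTilde Δ - (-1 : ℤ) ^ (d + 1))
            * ∏ j, ((a j).choose (b j) : ℤ))
    ∧ (chiTilde Δ = (-1 : ℤ) ^ (d + 1) → ∀ b : Fin m → ℕ, b ≤ a → h (a - b) = h b) := by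
  classical
  have hble : ∀ F ∈ Δ, ∀ j, bvec κ F j ≤ a j := fun F hF j => FlagDS.bvec_le κ hΔ hbal hF j
  have step1 : ∀ F : Finset V,
      C (mult Δ d F) * ((∏ j, (X j : MvPolynomial (Fin m) ℤ) ^ bvec κ F j) *
        ∏ j, (1 - X j) ^ (a j - bvec κ F j))
      = ∑ G ∈ Δ, if F ⊆ G then C ((-1 : ℤ) ^ (d - G.card)) *
          ((∏ j, (X j : MvPolynomial (Fin m) ℤ) ^ bvec κ F j) *
            ∏ j, (1 - X j) ^ (a j - bvec κ F j)) else 0 := by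
    intro F
    simp only [mult, map_sum, Finset.sum_mul, Finset.sum_filter]
    refine Finset.sum_congr rfl fun G _ => ?_
    split <;> simp
  have star : ∑ G ∈ Δ, C (mult Δ d G) * ((∏ j, (X j : MvPolynomial (Fin m) ℤ) ^ bvec κ G j) *
        ∏ j, (1 - X j) ^ (a j - bvec κ G j))
      = ∑ G ∈ Δ, C ((-1 : ℤ) ^ (d - G.card)) * ∏ j, (1 - X j) ^ (a j - bvec κ G j) := by
    rw [Finset.sum_congr rfl fun F _ => step1 F, Finset.sum_comm]
    refine Finset.sum_congr rfl fun G hG => ?_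
    rw [← Finset.sum_filter, FlagDS.filter_subset_eq_powerset hΔ hG, ← Finset.mul_sum,
        FlagDS.L1 κ hΔ a (fun j => hble G hG j)]
  have hTe : (∏ j, (X j : MvPolynomial (Fin m) ℤ) ^ bvec κ (∅ : Finset V) j) *
      ∏ j, (1 - X j) ^ (a j - bvec κ (∅ : Finset V) j)
      = ∏ j, ((1 : MvPolynomial (Fin m) ℤ) - X j) ^ (a j) := by
    simp [bvec]
  have hsplit : ∑ G ∈ Δ, C (mult Δ d G) *
        ((∏ j, (X j : MvPolynomial (Fin m) ℤ) ^ bvec κ G j) *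
          ∏ j, (1 - X j) ^ (a j - bvec κ G j))
      = (∑ b' ∈ Finset.Iic a, C (h b') * ∏ j, X j ^ b' j)
        + C (mult Δ d ∅ - 1) * ∏ j, ((1 : MvPolynomial (Fin m) ℤ) - X j) ^ a j := by
    rw [hh, map_sub, map_one]
    rw [← Finset.sum_erase_add Δ _ hΔ.1, ← Finset.sum_erase_add Δ
      (fun G => (∏ j, (X j : MvPolynomial (Fin m) ℤ) ^ bvec κ G j) *
        ∏ j, (1 - X j) ^ (a j - bvec κ G j)) hΔ.1]
    have h1 : ∑ G ∈ Δ.erase ∅, C (mult Δ d G) *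
        ((∏ j, (X j : MvPolynomial (Fin m) ℤ) ^ bvec κ G j) *
          ∏ j, (1 - X j) ^ (a j - bvec κ G j))
        = ∑ G ∈ Δ.erase ∅, (∏ j, (X j : MvPolynomial (Fin m) ℤ) ^ bvec κ G j) *
            ∏ j, (1 - X j) ^ (a j - bvec κ G j) := by
      refine Finset.sum_congr rfl fun G hG => ?_
      rw [hse G (Finset.mem_of_mem_erase hG) (Finset.ne_of_mem_erase hG), map_one, one_mul]
    rw [h1, hTe]
    ring
  have ident := hsplit.symm.trans star
  have coeffL : ∀ c : Fin m → ℕ, c ≤ a →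
      coeff (Finsupp.equivFunOnFinite.symm c)
        (∑ b' ∈ Finset.Iic a, C (h b') * ∏ j, X j ^ b' j) = h c := by
    intro c hc
    rw [MvPolynomial.coeff_sum]
    simp_rw [coeff_C_mul, FlagDS.XP_eq_monomial, coeff_monomial]
    rw [Finset.sum_eq_single_of_mem c (Finset.mem_Iic.2 hc)]
    · rw [if_pos rfl, mul_one]
    · intro b' _ hne
      rw [if_neg, mul_zero]
      exact fun heq => hne
        ((Equiv.symm (Finsupp.equivFunOnFinite : (Fin m →₀ ℕ) ≃ (Fin m → ℕ))).injective heq)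
  have main : ∀ b : Fin m → ℕ, b ≤ a → h (a - b) - h b
      = (mult Δ d ∅ - 1) * ((-1 : ℤ) ^ (∑ j, b j) * ∏ j, ((a j).choose (b j) : ℤ)) := by
    intro b hba
    have hbaj : ∀ j, b j ≤ a j := fun j => hba j
    have hab_le : (a - b) ≤ a := fun j => Nat.sub_le _ _
    have e1 : h (a - b) = ∑ G ∈ Δ,
        (if ∀ j, bvec κ G j ≤ a j - b j ∧ a j - b j ≤ bvec κ G j + (a j - bvec κ G j)
         then (-1 : ℤ) ^ (∑ j, (a j - b j - bvec κ G j)) *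
            ∏ j, ((a j - bvec κ G j).choose (a j - b j - bvec κ G j) : ℤ) else 0) := by
      have hcb := congrArg (coeff (Finsupp.equivFunOnFinite.symm (a - b))) hh
      rw [coeffL (a - b) hab_le, MvPolynomial.coeff_sum] at hcb
      rw [hcb]
      refine Finset.sum_congr rfl fun G _ => ?_
      exact FlagDS.coeff_XP_mul_YP (bvec κ G) (fun j => a j - bvec κ G j) (a - b)
    have e2 : h b + (mult Δ d ∅ - 1) * ((-1 : ℤ) ^ (∑ j, b j) * ∏ j, ((a j).choose (b j) : ℤ))
        = ∑ G ∈ Δ, (-1 : ℤ) ^ (d - G.card) *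
            (if ∀ j, b j ≤ a j - bvec κ G j
             then (-1 : ℤ) ^ (∑ j, b j) * ∏ j, ((a j - bvec κ G j).choose (b j) : ℤ) else 0) := by
      have hcb := congrArg (coeff (Finsupp.equivFunOnFinite.symm b)) ident
      rw [MvPolynomial.coeff_add, coeffL b hba, coeff_C_mul, FlagDS.coeff_YP a b,
          if_pos hbaj, MvPolynomial.coeff_sum] at hcb
      simp_rw [coeff_C_mul, FlagDS.coeff_YP] at hcb
      exact hcb
    have e3 : (∑ G ∈ Δ,
        (if ∀ j, bvec κ G j ≤ a j - b j ∧ a j - b j ≤ bvec κ G j + (a j - bvec κ G j)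
         then (-1 : ℤ) ^ (∑ j, (a j - b j - bvec κ G j)) *
            ∏ j, ((a j - bvec κ G j).choose (a j - b j - bvec κ G j) : ℤ) else 0))
        = ∑ G ∈ Δ, (-1 : ℤ) ^ (d - G.card) *
            (if ∀ j, b j ≤ a j - bvec κ G j
             then (-1 : ℤ) ^ (∑ j, b j) * ∏ j, ((a j - bvec κ G j).choose (b j) : ℤ) else 0) :=
      Finset.sum_congr rfl fun G hG =>
        FlagDS.perG a b (bvec κ G) hbaj (hble G hG) d G.card hd
          (FlagDS.bvec_sum_eq_card κ G).symm
    rw [e1, e3, ← e2]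
    ring
  constructor
  · intro b hb
    rw [main b hb, FlagDS.klee hΔ hse, pow_succ]
    ring
  · intro hχ b hb
    have h1 := main b hb
    rw [FlagDS.klee hΔ hse, hχ, pow_succ] at h1
    have h2 : ((-1 : ℤ) ^ d + (-1 : ℤ) ^ d * -1 + 1 - 1) = 0 := by ring
    rw [h2, zero_mul] at h1
    linarith
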